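/- arXiv:hep-th/0411277 — 2 statements merged into one kernel-verified Lean document; each statement's English description precedes it below -/
import Mathlib

section
/- For Re(α) > -1 and z in the cut plane ℂ \ [1,∞), the polylogarithm satisfies Li_α(z) = (z/Γ(α+1)) ∫_1^∞ (log s)^α/(s - z)² ds. -/
open MeasureTheory Set Real Filter

lemma exp_image_Ioi : Real.exp '' Set.Ioi (0:ℝ) = Set.Ioi 1 := by
  ext x
  constructor
  · rintro ⟨t, ht, rfl⟩
    simpa using Real.one_lt_exp_iff.mpr ht
  · intro hx
    exact ⟨Real.log x, Real.log_pos hx, Real.exp_log (by linarith [Set.mem_Ioi.mp hx])⟩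

lemma subst_exp (g : ℝ → ℂ) :
    ∫ s in Set.Ioi (1:ℝ), g s = ∫ t in Set.Ioi (0:ℝ), Real.exp t • g (Real.exp t) := by
  rw [← exp_image_Ioi,
    integral_image_eq_integral_abs_deriv_smul measurableSet_Ioi
      (fun x _ => (Real.hasDerivAt_exp x).hasDerivWithinAt) Real.exp_injective.injOn g]
  refine setIntegral_congr_fun measurableSet_Ioi fun t _ => ?_
  rw [abs_of_pos (Real.exp_pos t)]

lemma subst_exp_integrableOn (g : ℝ → ℂ) :
    IntegrableOn g (Set.Ioi (1:ℝ)) ↔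
      IntegrableOn (fun t => Real.exp t • g (Real.exp t)) (Set.Ioi (0:ℝ)) := by
  rw [← exp_image_Ioi,
    integrableOn_image_iff_integrableOn_abs_deriv_smul measurableSet_Ioi
      (fun x _ => (Real.hasDerivAt_exp x).hasDerivWithinAt) Real.exp_injective.injOn g]
  exact integrableOn_congr_fun (fun t _ => by rw [abs_of_pos (Real.exp_pos t)]) measurableSet_Ioi

open Complex in
lemma keyIntegrable (γ : ℂ) (hγ : 0 < γ.re) (r : ℝ) (hr : 0 < r) :
    IntegrableOn (fun t : ℝ => (t:ℂ)^(γ-1) * Complex.exp (-(r*t))) (Set.Ioi 0) := by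
  have := Complex.GammaIntegral_convergent hγ
  rw [← mul_zero r, ← integrableOn_Ioi_comp_mul_left_iff _ _ hr] at this
  refine (IntegrableOn.congr_fun (this.const_mul (1 / (r:ℂ) ^ (γ - 1)))
      (fun t (ht : 0 < t) => ?_) measurableSet_Ioi)
  rw [mul_comm (↑(rexp _) : ℂ), ← mul_assoc, ofReal_mul,
    mul_cpow_ofReal_nonneg hr.le ht.le, ← mul_assoc, one_div, inv_mul_cancel₀, one_mul]
  · norm_cast
  rw [Ne, cpow_eq_zero_iff, not_and_or]
  exact Or.inl (ofReal_ne_zero.mpr hr.ne')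

open Complex in
lemma subst_pointwise (γ : ℂ) (r : ℝ) (t : ℝ) :
    Real.exp t • ((Real.log (Real.exp t) : ℂ)^(γ-1) * ((Real.exp t : ℝ):ℂ)^(-(r:ℂ)-1))
      = (t:ℂ)^(γ-1) * Complex.exp (-(r*t)) := by
  have h : ((Real.exp t : ℝ):ℂ)^(-(r:ℂ)-1) = Complex.exp (↑t * (-(r:ℂ)-1)) := by
    rw [Complex.ofReal_exp, cpow_def_of_ne_zero (Complex.exp_ne_zero _),
      Complex.log_exp (by simpa using Real.pi_pos) (by simpa using Real.pi_pos.le)]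
  rw [Real.log_exp, h, Complex.real_smul, Complex.ofReal_exp, mul_left_comm,
    ← Complex.exp_add]
  congr 1
  ring

open Complex in
lemma baseIntegrableOn (γ : ℂ) (hγ : 0 < γ.re) (r : ℝ) (hr : 0 < r) :
    IntegrableOn (fun s : ℝ => (Real.log s : ℂ)^(γ-1) * (s:ℂ)^(-(r:ℂ)-1)) (Set.Ioi 1) := by
  rw [subst_exp_integrableOn]
  exact IntegrableOn.congr_fun (keyIntegrable γ hγ r hr)
    (fun t _ => (subst_pointwise γ r t).symm) measurableSet_Ioi

open Complex in
lemma baseIntegral (γ : ℂ) (hγ : 0 < γ.re) (r : ℝ) (hr : 0 < r) :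
    ∫ s in Set.Ioi (1:ℝ), (Real.log s : ℂ)^(γ-1) * (s:ℂ)^(-(r:ℂ)-1)
      = (1/r:ℂ)^γ * Complex.Gamma γ := by
  rw [subst_exp, ← integral_cpow_mul_exp_neg_mul_Ioi hγ hr]
  exact setIntegral_congr_fun measurableSet_Ioi fun t _ => subst_pointwise γ r t

open Complex in
lemma sz_ne (z : ℂ) (hz : ‖z‖ < 1) {s : ℝ} (hs : 1 < s) : (s:ℂ) - z ≠ 0 := by
  intro h
  have : (s:ℂ) = z := by linear_combination h
  rw [← this] at hz
  simp only [Complex.norm_real, Real.norm_eq_abs] at hz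
  rw [abs_of_pos (by linarith)] at hz
  linarith

open Complex in
lemma seriesPointwise (α : ℂ) (z : ℂ) (hz : ‖z‖ < 1) {s : ℝ} (hs : 1 < s) :
    HasSum (fun k : ℕ => (Real.log s:ℂ)^α * (((k:ℂ)+1) * z^k / ((s:ℂ))^(k+2)))
      ((Real.log s:ℂ)^α / ((s:ℂ)-z)^2) := by
  have hs0 : (0:ℝ) < s := by linarith
  have hsC : (s:ℂ) ≠ 0 := by exact_mod_cast hs0.ne'
  set w : ℂ := z / s with hw
  have hwn : ‖w‖ < 1 := by
    rw [hw, norm_div, Complex.norm_real, Real.norm_eq_abs, abs_of_pos hs0, div_lt_one hs0]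
    linarith
  have hw1 : (1:ℂ) - w ≠ 0 := by
    intro h
    have : w = 1 := by linear_combination -h
    rw [this] at hwn; simp at hwn
  have h1 := hasSum_coe_mul_geometric_of_norm_lt_one hwn
  have h2 := hasSum_geometric_of_norm_lt_one hwn
  have h3 := (h1.add h2).mul_left ((Real.log s:ℂ)^α / ((s:ℂ))^2)
  have hsz := sz_ne z hz hs
  have hfun : (fun k : ℕ => (Real.log s:ℂ)^α * (((k:ℂ)+1) * z^k / ((s:ℂ))^(k+2)))
      = fun i : ℕ => (Real.log s:ℂ)^α / ((s:ℂ))^2 * ((i:ℂ) * w ^ i + w ^ i) := by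
    funext k
    have hwk : w ^ k = z^k / (s:ℂ)^k := by rw [hw, div_pow]
    rw [hwk]
    rw [pow_add]
    field_simp
  have hsum : (Real.log s:ℂ)^α / ((s:ℂ))^2 * (w / (1-w)^2 + (1-w)⁻¹)
      = (Real.log s:ℂ)^α / ((s:ℂ)-z)^2 := by
    have hfac : ((s:ℂ) - z) = (s:ℂ) * (1 - w) := by rw [hw]; field_simp
    have hdiv : w / (1-w)^2 + (1-w)⁻¹ = 1/(1-w)^2 := by field_simp; ring
    rw [hdiv, hfac, mul_pow]
    field_simp
  rw [hfun, ← hsum]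
  exact h3

open Complex in
lemma cpow_neg_nat_eq (k : ℕ) {s : ℝ} (hs : 0 < s) :
    ((s:ℂ))^(-((k:ℂ)+1)-1) = (((s:ℂ))^(k+2))⁻¹ := by
  have h0 : (s:ℂ) ≠ 0 := by exact_mod_cast hs.ne'
  rw [show (-((k:ℂ)+1)-1 : ℂ) = -((k+2 : ℕ):ℂ) by push_cast; ring,
    Complex.cpow_neg, Complex.cpow_natCast]

open Complex in
lemma fkIntegrable (α : ℂ) (hα : 0 < (α+1).re) (z : ℂ) (k : ℕ) :
    IntegrableOn (fun s : ℝ => (Real.log s:ℂ)^α * (((k:ℂ)+1) * z^k / ((s:ℂ))^(k+2)))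
      (Set.Ioi (1:ℝ)) := by
  have hb := (baseIntegrableOn (α+1) hα ((k:ℝ)+1) (by positivity)).const_mul (((k:ℂ)+1) * z^k)
  refine IntegrableOn.congr_fun hb (fun s hs => ?_) measurableSet_Ioi
  simp only [add_sub_cancel_right]
  push_cast
  rw [cpow_neg_nat_eq k (lt_trans one_pos hs)]
  ring

open Complex in
lemma fkIntegral (α : ℂ) (hα : 0 < (α+1).re) (z : ℂ) (k : ℕ) :
    ∫ s in Set.Ioi (1:ℝ), (Real.log s:ℂ)^α * (((k:ℂ)+1) * z^k / ((s:ℂ))^(k+2))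
      = ((k:ℂ)+1) * z^k * (((1:ℂ)/((k:ℂ)+1))^(α+1) * Complex.Gamma (α+1)) := by
  have hb := baseIntegral (α+1) hα ((k:ℝ)+1) (by positivity)
  push_cast at hb
  rw [← hb, ← integral_const_mul]
  refine setIntegral_congr_fun measurableSet_Ioi (fun s hs => ?_)
  simp only [add_sub_cancel_right]
  rw [cpow_neg_nat_eq k (lt_trans one_pos hs)]
  ring

open Complex in
lemma fkNormBound (α : ℂ) (z : ℂ) (hz : ‖z‖ < 1) (k : ℕ) {s : ℝ} (hs : 1 < s) :
    ‖(Real.log s:ℂ)^α * (((k:ℂ)+1) * z^k / ((s:ℂ))^(k+2))‖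
      ≤ (((k:ℝ)+1) * ‖z‖^k) * ‖(Real.log s:ℂ)^α * ((s:ℂ))^(-((1:ℝ):ℂ)-1)‖ := by
  have hs0 : (0:ℝ) < s := lt_trans one_pos hs
  have h2 : ((s:ℂ))^(-((1:ℝ):ℂ)-1) = (((s:ℂ))^(2:ℕ))⁻¹ := by
    have h0 : (s:ℂ) ≠ 0 := by exact_mod_cast hs0.ne'
    rw [show (-((1:ℝ):ℂ)-1 : ℂ) = -((2:ℕ):ℂ) by push_cast; ring,
      Complex.cpow_neg, Complex.cpow_natCast]
  rw [h2]
  simp only [norm_mul, norm_div, norm_inv, norm_pow, Complex.norm_real, Real.norm_eq_abs,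
    abs_of_pos hs0]
  have hk : ‖((k:ℂ)+1)‖ = (k:ℝ)+1 := by
    rw [show ((k:ℂ)+1) = (((k+1:ℕ)):ℂ) by push_cast; ring, Complex.norm_natCast]
    push_cast; ring
  rw [hk]
  have hpow : (s:ℝ)^(2:ℕ) ≤ s^(k+2) := pow_le_pow_right₀ hs.le (by omega)
  have hpos2 : (0:ℝ) < s^(2:ℕ) := by positivity
  have hposk : (0:ℝ) < s^(k+2) := by positivity
  have hinv : (s^(k+2))⁻¹ ≤ ((s:ℝ)^(2:ℕ))⁻¹ := by
    exact inv_anti₀ hpos2 hpow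
  calc ‖(Real.log s:ℂ)^α‖ * ((((k:ℝ)+1) * ‖z‖^k) / s^(k+2))
      ≤ ‖(Real.log s:ℂ)^α‖ * ((((k:ℝ)+1) * ‖z‖^k) * ((s:ℝ)^(2:ℕ))⁻¹) := by
        rw [div_eq_mul_inv]
        gcongr
    _ = (((k:ℝ)+1) * ‖z‖^k) * (‖(Real.log s:ℂ)^α‖ * ((s:ℝ)^(2:ℕ))⁻¹) := by ring

open Complex in
lemma integralSwap (α : ℂ) (hα : 0 < (α+1).re) (z : ℂ) (hz : ‖z‖ < 1) :
    HasSum (fun k : ℕ => ((k:ℂ)+1) * z^k * (((1:ℂ)/((k:ℂ)+1))^(α+1) * Complex.Gamma (α+1)))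
      (∫ s in Set.Ioi (1:ℝ), (Real.log s : ℂ)^α / ((s:ℂ) - z)^2) := by
  have hint : ∀ k : ℕ, Integrable
      (fun s : ℝ => (Real.log s:ℂ)^α * (((k:ℂ)+1)*z^k/((s:ℂ))^(k+2)))
      (volume.restrict (Set.Ioi 1)) := fun k => fkIntegrable α hα z k
  have hg1 : IntegrableOn (fun s : ℝ => (Real.log s:ℂ)^α * (s:ℂ)^(-((1:ℝ):ℂ)-1))
      (Set.Ioi (1:ℝ)) := by
    have := baseIntegrableOn (α+1) hα 1 one_pos
    simpa only [add_sub_cancel_right] using this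
  have hle : ∀ k : ℕ, (∫ s in Set.Ioi (1:ℝ), ‖(Real.log s:ℂ)^α * (((k:ℂ)+1)*z^k/((s:ℂ))^(k+2))‖)
      ≤ (((k:ℝ)+1)*‖z‖^k) * ∫ s in Set.Ioi (1:ℝ), ‖(Real.log s:ℂ)^α * (s:ℂ)^(-((1:ℝ):ℂ)-1)‖ := by
    intro k
    rw [← integral_const_mul]
    refine setIntegral_mono_on (hint k).norm ((hg1.norm).const_mul _) measurableSet_Ioi ?_
    intro s hs
    exact fkNormBound α z hz k hs
  have hsummable : Summable (fun k : ℕ =>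
      ∫ s in Set.Ioi (1:ℝ), ‖(Real.log s:ℂ)^α * (((k:ℂ)+1)*z^k/((s:ℂ))^(k+2))‖) := by
    refine Summable.of_nonneg_of_le (fun k => integral_nonneg fun _ => norm_nonneg _) hle ?_
    apply Summable.mul_right
    have h1 : Summable (fun k : ℕ => (k:ℝ)*‖z‖^k) := by
      simpa using summable_pow_mul_geometric_of_norm_lt_one 1 (r := ‖z‖) (by simpa using hz)
    have h2 : Summable (fun k : ℕ => ‖z‖^k) :=
      summable_geometric_of_lt_one (norm_nonneg z) hz
    simpa [add_mul] using h1.add h2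
  have H := hasSum_integral_of_summable_integral_norm hint hsummable
  have hfun : (fun k : ℕ => ∫ s in Set.Ioi (1:ℝ),
      (Real.log s:ℂ)^α * (((k:ℂ)+1)*z^k/((s:ℂ))^(k+2)))
      = fun k : ℕ => ((k:ℂ)+1) * z^k * (((1:ℂ)/((k:ℂ)+1))^(α+1) * Complex.Gamma (α+1)) :=
    funext fun k => fkIntegral α hα z k
  have hsum : (∫ s in Set.Ioi (1:ℝ),
      ∑' k : ℕ, (Real.log s:ℂ)^α * (((k:ℂ)+1)*z^k/((s:ℂ))^(k+2)))
      = ∫ s in Set.Ioi (1:ℝ), (Real.log s : ℂ)^α / ((s:ℂ) - z)^2 :=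
    setIntegral_congr_fun measurableSet_Ioi fun s hs => (seriesPointwise α z hz hs).tsum_eq
  rw [hfun, hsum] at H
  exact H

open Complex in
lemma partB (α : ℂ) (hα : -1 < α.re) (z : ℂ) (hz : ‖z‖ < 1) :
    ∑' k : ℕ, z ^ (k + 1) / ((k + 1 : ℕ) : ℂ) ^ α =
      z / Complex.Gamma (α + 1) *
        ∫ s in Set.Ioi (1:ℝ), (Real.log s:ℂ)^α / ((s:ℂ) - z)^2 := by
  have hα' : 0 < (α+1).re := by
    rw [Complex.add_re, Complex.one_re]; linarith
  have hΓ : Complex.Gamma (α+1) ≠ 0 := Complex.Gamma_ne_zero_of_re_pos hα'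
  have H := (integralSwap α hα' z hz).mul_left (z / Complex.Gamma (α+1))
  have hterm : (fun k : ℕ => z / Complex.Gamma (α+1) *
      (((k:ℂ)+1) * z^k * (((1:ℂ)/((k:ℂ)+1))^(α+1) * Complex.Gamma (α+1))))
      = fun k : ℕ => z ^ (k + 1) / ((k + 1 : ℕ) : ℂ) ^ α := by
    funext k
    have hc : ((k:ℂ)+1) ≠ 0 := Nat.cast_add_one_ne_zero k
    have harg : ((k:ℂ)+1).arg ≠ Real.pi := by
      rw [show ((k:ℂ)+1) = ((k+1:ℕ):ℂ) by push_cast; ring, Complex.natCast_arg]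
      exact Real.pi_ne_zero.symm
    have h1 : ((1:ℂ)/((k:ℂ)+1))^(α+1) = (((k:ℂ)+1)^(α+1))⁻¹ := by
      rw [one_div, inv_cpow _ _ harg]
    have h2 : ((k:ℂ)+1)^(α+1) = ((k:ℂ)+1)^α * ((k:ℂ)+1) := by
      rw [cpow_add _ _ hc, cpow_one]
    have h3 : ((k:ℂ)+1)^α ≠ 0 := by
      simp only [Ne, Complex.cpow_eq_zero_iff, not_and_or, not_not]
      exact Or.inl hc
    rw [h1, h2]
    push_cast
    field_simp
    ring
  rw [hterm] at H
  exact H.tsum_eq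

lemma cball_bound {z₀ : ℂ} {ε δ : ℝ} (hε : 0 < ε) (hδ : 0 < δ)
    (hdist : ∀ z ∈ Metric.closedBall z₀ ε, ∀ s : ℝ, 1 ≤ s → δ ≤ ‖(s:ℂ) - z‖) :
    ∃ c, 0 < c ∧ ∀ z ∈ Metric.closedBall z₀ ε, ∀ s : ℝ, 1 ≤ s → c * s ≤ ‖(s:ℂ) - z‖ := by
  set S : ℝ := 2*(‖z₀‖ + ε) + 2 with hSdef
  have hS : 0 < S := by positivity
  refine ⟨min (1/2) (δ/S), lt_min (by norm_num) (div_pos hδ hS), ?_⟩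
  intro z hz s hs
  have hs0 : (0:ℝ) < s := by linarith
  by_cases hcase : s ≤ S
  · calc min (1/2) (δ/S) * s ≤ (δ/S) * s := by
          gcongr
          exact min_le_right _ _
      _ ≤ (δ/S) * S := by gcongr
      _ = δ := by field_simp
      _ ≤ ‖(s:ℂ) - z‖ := hdist z hz s hs
  · push_neg at hcase
    have hzn : ‖z‖ ≤ ‖z₀‖ + ε := by
      have h := Metric.mem_closedBall.mp hz
      have h2 : ‖z - z₀‖ ≤ ε := by rwa [← dist_eq_norm]
      calc ‖z‖ = ‖z₀ + (z - z₀)‖ := by congr 1; ring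
        _ ≤ ‖z₀‖ + ‖z - z₀‖ := norm_add_le _ _
        _ ≤ ‖z₀‖ + ε := by linarith
    have h1 : s - ‖z‖ ≤ ‖(s:ℂ) - z‖ := by
      have h2 := norm_sub_norm_le ((s:ℂ)) z
      rwa [Complex.norm_real, Real.norm_eq_abs, abs_of_pos hs0] at h2
    calc min (1/2) (δ/S) * s ≤ (1/2)*s := by
          gcongr
          exact min_le_left _ _
      _ ≤ s - (‖z₀‖+ε) := by
          have : 2*(‖z₀‖ + ε) + 2 < s := hcase
          linarith
      _ ≤ s - ‖z‖ := by linarith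
      _ ≤ ‖(s:ℂ)-z‖ := h1

open Complex in
lemma norm_base_eq (α : ℂ) (r : ℝ) {s : ℝ} (hs : 1 < s) :
    ‖(Real.log s:ℂ)^α * ((s:ℂ))^(-(r:ℂ)-1)‖ = ‖(Real.log s:ℂ)^α‖ * ((s:ℝ)^(r+1:ℝ))⁻¹ := by
  have hs0 : (0:ℝ) < s := lt_trans one_pos hs
  rw [norm_mul, Complex.norm_cpow_eq_rpow_re_of_pos hs0]
  congr 1
  rw [show ((-(r:ℂ)-1).re) = -(r+1) by simp; ring, Real.rpow_neg hs0.le]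

open Complex in
lemma contOnF (α : ℂ) (c z : ℂ) (hz : ∀ s : ℝ, 1 < s → (s:ℂ) ≠ z) (n : ℕ) :
    ContinuousOn (fun s : ℝ => c * (Real.log s:ℂ)^α / ((s:ℂ) - z)^n) (Set.Ioi 1) := by
  apply ContinuousOn.div
  · apply ContinuousOn.mul continuousOn_const
    have hlogc : ContinuousOn (fun s : ℝ => ((Real.log s : ℝ) : ℂ)) (Set.Ioi 1) := by
      intro s hs
      exact (Complex.continuous_ofReal.continuousAt.comp
        (Real.continuousAt_log (by have : (1:ℝ) < s := hs; linarith))).continuousWithinAt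
    exact hlogc.cpow_const fun s hs =>
      Complex.ofReal_mem_slitPlane.2 (Real.log_pos hs)
  · exact ((Complex.continuous_ofReal.sub continuous_const).pow n).continuousOn
  · intro s hs
    exact pow_ne_zero n (sub_ne_zero.mpr (hz s hs))

open Complex in
lemma hasDerivAtF (α : ℂ) {s : ℝ} {z : ℂ} (h : (s:ℂ) - z ≠ 0) :
    HasDerivAt (fun z : ℂ => (Real.log s:ℂ)^α / ((s:ℂ) - z)^2)
      (2 * (Real.log s:ℂ)^α / ((s:ℂ) - z)^3) z := by
  have hu : HasDerivAt (fun z : ℂ => (s:ℂ) - z) (-1) z := by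
    simpa using (hasDerivAt_id z).const_sub ((s:ℂ))
  have hpow : HasDerivAt (fun z : ℂ => ((s:ℂ) - z)^2) (2*((s:ℂ)-z)^1*(-1)) z := by
    simpa using hu.fun_pow 2
  have hne : ((s:ℂ)-z)^2 ≠ 0 := pow_ne_zero _ h
  have hinv := hpow.inv hne
  have := hinv.const_mul ((Real.log s:ℂ)^α)
  have hfun : (fun z : ℂ => (Real.log s:ℂ)^α / ((s:ℂ) - z)^2)
      = fun z : ℂ => (Real.log s:ℂ)^α * (((s:ℂ) - z)^2)⁻¹ := by
    funext w; rw [div_eq_mul_inv]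
  rw [hfun, show 2 * (Real.log s:ℂ)^α / ((s:ℂ) - z)^3
      = (Real.log s:ℂ)^α * (-(2*((s:ℂ)-z)^1*(-1)) / (((s:ℂ)-z)^2)^2) by field_simp]
  exact this

open Complex in
lemma diffG (α : ℂ) (hα' : 0 < (α+1).re) {z₀ : ℂ}
    (hz₀ : z₀ ∈ (Complex.ofReal '' Set.Ici (1:ℝ))ᶜ) :
    DifferentiableAt ℂ
      (fun z : ℂ => ∫ s in Set.Ioi (1:ℝ), (Real.log s:ℂ)^α / ((s:ℂ) - z)^2) z₀ := by
  set C : Set ℂ := Complex.ofReal '' Set.Ici (1:ℝ) with hC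
  have hCclosed : IsClosed C :=
    (Complex.isometry_ofReal.isClosedEmbedding.isClosedMap) _ isClosed_Ici
  have hUopen : IsOpen Cᶜ := hCclosed.isOpen_compl
  obtain ⟨r, hr, hball⟩ := Metric.isOpen_iff.mp hUopen z₀ hz₀
  set ε := r/2 with hεdef
  have hε : 0 < ε := by positivity
  have hKsub : Metric.closedBall z₀ ε ⊆ Cᶜ :=
    (Metric.closedBall_subset_ball (by rw [hεdef]; linarith)).trans hball
  have hCne : C.Nonempty := ⟨(1:ℂ), ⟨1, Set.mem_Ici.mpr le_rfl, rfl⟩⟩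
  obtain ⟨w₀, hw₀K, hw₀min⟩ := (isCompact_closedBall z₀ ε).exists_isMinOn
      (Metric.nonempty_closedBall.mpr hε.le) (Metric.continuous_infDist_pt C).continuousOn
  have hδpos : 0 < Metric.infDist w₀ C := by
    rw [← hCclosed.notMem_iff_infDist_pos hCne]
    exact hKsub hw₀K
  have hdist : ∀ z ∈ Metric.closedBall z₀ ε, ∀ s : ℝ, 1 ≤ s →
      Metric.infDist w₀ C ≤ ‖(s:ℂ) - z‖ := by
    intro z hz s hs
    have h1 : Metric.infDist w₀ C ≤ Metric.infDist z C := hw₀min hz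
    have h2 : Metric.infDist z C ≤ dist z ((s:ℂ)) :=
      Metric.infDist_le_dist_of_mem ⟨s, hs, rfl⟩
    calc Metric.infDist w₀ C ≤ dist z ((s:ℂ)) := le_trans h1 h2
      _ = ‖(s:ℂ) - z‖ := by rw [dist_eq_norm, norm_sub_rev]
  obtain ⟨c, hc, hcb⟩ := cball_bound hε hδpos hdist
  have hne : ∀ z ∈ Metric.closedBall z₀ ε, ∀ s : ℝ, 1 < s → (s:ℂ) - z ≠ 0 := by
    intro z hz s hs h
    have h1 := hcb z hz s hs.le
    rw [h, norm_zero] at h1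
    nlinarith
  have hnorm : ∀ z ∈ Metric.closedBall z₀ ε, ∀ s : ℝ, 1 < s →
      ∀ C₀ : ℂ, ∀ n : ℕ,
      ‖C₀ * (Real.log s:ℂ)^α / ((s:ℂ)-z)^n‖
        ≤ (‖C₀‖/c^n) * (‖(Real.log s:ℂ)^α‖ * ((s:ℝ)^(n:ℝ))⁻¹) := by
    intro z hz s hs C₀ n
    have hs0 : (0:ℝ) < s := by linarith
    have h1 := hcb z hz s hs.le
    have hcs : 0 < c * s := by positivity
    have hvpos : 0 < ‖(s:ℂ)-z‖ := lt_of_lt_of_le hcs h1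
    rw [norm_div, norm_mul, norm_pow]
    have hp : (c*s)^n ≤ ‖(s:ℂ)-z‖^n := pow_le_pow_left₀ hcs.le h1 n
    calc ‖C₀‖ * ‖(Real.log s:ℂ)^α‖ / ‖(s:ℂ)-z‖^n
        ≤ ‖C₀‖ * ‖(Real.log s:ℂ)^α‖ / (c*s)^n := by gcongr
      _ = (‖C₀‖/c^n) * (‖(Real.log s:ℂ)^α‖ * ((s:ℝ)^(n:ℝ))⁻¹) := by
          rw [Real.rpow_natCast, mul_pow]
          field_simp
  -- bound function and its integrability
  have hg2 : IntegrableOn (fun s : ℝ => (Real.log s:ℂ)^α * (s:ℂ)^(-((2:ℝ):ℂ)-1))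
      (Set.Ioi (1:ℝ)) := by
    have := baseIntegrableOn (α+1) hα' 2 two_pos
    simpa only [add_sub_cancel_right] using this
  have hg1 : IntegrableOn (fun s : ℝ => (Real.log s:ℂ)^α * (s:ℂ)^(-((1:ℝ):ℂ)-1))
      (Set.Ioi (1:ℝ)) := by
    have := baseIntegrableOn (α+1) hα' 1 one_pos
    simpa only [add_sub_cancel_right] using this
  have key := hasDerivAt_integral_of_dominated_loc_of_deriv_le
    (F := fun (z : ℂ) (s : ℝ) => (Real.log s:ℂ)^α / ((s:ℂ) - z)^2)
    (F' := fun (z : ℂ) (s : ℝ) => 2 * (Real.log s:ℂ)^α / ((s:ℂ) - z)^3)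
    (x₀ := z₀) (s := Metric.ball z₀ ε)
    (bound := fun s => (2/c^3) * (‖(Real.log s:ℂ)^α‖ * ((s:ℝ)^((3:ℕ):ℝ))⁻¹))
    (μ := volume.restrict (Set.Ioi 1)) (Metric.ball_mem_nhds z₀ hε) ?_ ?_ ?_ ?_ ?_ ?_
  · exact key.2.differentiableAt
  · -- measurability of F z for z near z₀
    filter_upwards [Metric.ball_mem_nhds z₀ hε] with z hz
    have hz' : z ∈ Metric.closedBall z₀ ε := Metric.ball_subset_closedBall hz
    have hcont := contOnF α 1 z (fun s hs => sub_ne_zero.mp (hne z hz' s hs)) 2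
    simp only [one_mul] at hcont
    exact hcont.aestronglyMeasurable measurableSet_Ioi
  · -- integrability of F z₀
    have hz₀' : z₀ ∈ Metric.closedBall z₀ ε := Metric.mem_closedBall_self hε.le
    have hcont := contOnF α 1 z₀ (fun s hs => sub_ne_zero.mp (hne z₀ hz₀' s hs)) 2
    simp only [one_mul] at hcont
    refine Integrable.mono (hg1.norm.const_mul (1/c^2))
      (hcont.aestronglyMeasurable measurableSet_Ioi) ?_
    rw [ae_restrict_iff' measurableSet_Ioi]
    filter_upwards with s hs
    have hs1 : (1:ℝ) < s := hs
    have hb := hnorm z₀ hz₀' s hs1 1 2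
    rw [one_mul, norm_one] at hb
    calc ‖(Real.log s:ℂ)^α / ((s:ℂ)-z₀)^2‖
        ≤ (1/c^2) * (‖(Real.log s:ℂ)^α‖ * ((s:ℝ)^((2:ℕ):ℝ))⁻¹) := hb
      _ ≤ ‖(1/c^2) * ‖(Real.log s:ℂ)^α * (s:ℂ)^(-((1:ℝ):ℂ)-1)‖‖ := by
          rw [norm_base_eq α 1 hs1, show ((2:ℕ):ℝ) = (1:ℝ)+1 by norm_num]
          exact le_abs_self _
  · -- measurability of F' z₀
    have hz₀' : z₀ ∈ Metric.closedBall z₀ ε := Metric.mem_closedBall_self hε.le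
    exact (contOnF α 2 z₀ (fun s hs => sub_ne_zero.mp (hne z₀ hz₀' s hs)) 3).aestronglyMeasurable
      measurableSet_Ioi
  · -- bound
    rw [ae_restrict_iff' measurableSet_Ioi]
    filter_upwards with s hs z hz
    have hs1 : (1:ℝ) < s := hs
    have hz' : z ∈ Metric.closedBall z₀ ε := Metric.ball_subset_closedBall hz
    have hb := hnorm z hz' s hs1 2 3
    calc ‖2 * (Real.log s:ℂ)^α / ((s:ℂ)-z)^3‖
        ≤ (‖(2:ℂ)‖/c^3) * (‖(Real.log s:ℂ)^α‖ * ((s:ℝ)^((3:ℕ):ℝ))⁻¹) := hb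
      _ = (2/c^3) * (‖(Real.log s:ℂ)^α‖ * ((s:ℝ)^((3:ℕ):ℝ))⁻¹) := by norm_num
  · -- integrability of bound
    refine Integrable.const_mul ?_ _
    have h3 : ∀ s ∈ Set.Ioi (1:ℝ),
        ‖(Real.log s:ℂ)^α * (s:ℂ)^(-((2:ℝ):ℂ)-1)‖
          = ‖(Real.log s:ℂ)^α‖ * ((s:ℝ)^((3:ℕ):ℝ))⁻¹ := by
      intro s hs
      rw [norm_base_eq α 2 hs]
      norm_num
    exact (integrableOn_congr_fun h3 measurableSet_Ioi).mp hg2.norm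
  · -- derivative
    rw [ae_restrict_iff' measurableSet_Ioi]
    filter_upwards with s hs z hz
    exact hasDerivAtF α (hne z (Metric.ball_subset_closedBall hz) s hs)

/-- The function z ↦ (z/Γ(α+1)) ∫_1^∞ (log s)^α/(s-z)² ds is analytic on the
cut plane ℂ \ [1,∞) and agrees with the polylogarithm series on the unit disk
(for Re α > -1): this is the analytic continuation of Li_α. -/
theorem stmt_12 (α : ℂ) (hα : -1 < α.re) :
    AnalyticOn ℂ
        (fun z : ℂ => z / Complex.Gamma (α + 1) *
          ∫ s in Set.Ioi (1 : ℝ),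
            ((Real.log s : ℂ)) ^ α / ((s : ℂ) - z) ^ 2)
        ((Complex.ofReal '' Set.Ici (1 : ℝ))ᶜ) ∧
      ∀ z : ℂ, ‖z‖ < 1 →
        ∑' k : ℕ, z ^ (k + 1) / ((k + 1 : ℕ) : ℂ) ^ α =
          z / Complex.Gamma (α + 1) *
            ∫ s in Set.Ioi (1 : ℝ),
              ((Real.log s : ℂ)) ^ α / ((s : ℂ) - z) ^ 2 := by
  have hα' : 0 < (α+1).re := by rw [Complex.add_re, Complex.one_re]; linarith
  constructor
  · have hCclosed : IsClosed (Complex.ofReal '' Set.Ici (1:ℝ)) :=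
      (Complex.isometry_ofReal.isClosedEmbedding.isClosedMap) _ isClosed_Ici
    refine DifferentiableOn.analyticOn ?_ hCclosed.isOpen_compl
    intro z hz
    exact ((differentiableAt_fun_id.div_const _).mul (diffG α hα' hz)).differentiableWithinAt
  · intro z hz
    exact partB α hα z hz
end

section
/- For x > 0 and any α > 0, ∫_{e^x}^∞ (log y + x)^α/(y+1)² dy = ∑_{n=1}^∞ (-1)^{n-1} n^{-α} e^{nx} Γ(α+1, 2nx), where Γ(·,·) is the upper incomplete gamma function; consequently this integral is O(x^α e^{-x}) as x → ∞. -/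
open Filter Asymptotics MeasureTheory Set Real Topology

namespace Stmt16



lemma int_exp_rate {b : ℝ} (hb : 0 < b) (z : ℝ) :
    ∫ t in Set.Ioi z, Real.exp (-b * t) = b⁻¹ * Real.exp (-b * z) := by
  have hderiv : ∀ t ∈ Set.Ici z, HasDerivAt (fun t : ℝ => -b⁻¹ * Real.exp (-b * t))
      (Real.exp (-b * t)) t := by
    intro t _
    have h := (((hasDerivAt_id t).const_mul (-b)).exp).const_mul (-b⁻¹)
    convert h using 1
    · rfl
    · rfl
    · rfl
    simp only [id]
    field_simp
  have hint : IntegrableOn (fun t : ℝ => Real.exp (-b * t)) (Set.Ioi z) :=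
    exp_neg_integrableOn_Ioi z hb
  have htend : Tendsto (fun t : ℝ => -b⁻¹ * Real.exp (-b * t)) atTop (𝓝 0) := by
    have h1 : Tendsto (fun t : ℝ => b * t) atTop atTop :=
      Tendsto.const_mul_atTop hb tendsto_id
    have h2 : Tendsto (fun t : ℝ => Real.exp (-b * t)) atTop (𝓝 0) := by
      have := tendsto_exp_neg_atTop_nhds_zero.comp h1
      simpa [Function.comp_def, neg_mul] using this
    simpa using h2.const_mul (-b⁻¹)
  rw [integral_Ioi_of_hasDerivAt_of_tendsto' hderiv hint htend]
  ring

lemma intGamma {α : ℝ} (hα : 0 < α) {z : ℝ} (hz : 0 ≤ z) :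
    IntegrableOn (fun t : ℝ => t ^ α * Real.exp (-t)) (Set.Ioi z) := by
  have h := Real.GammaIntegral_convergent (s := α + 1) (by linarith)
  have h2 : IntegrableOn (fun t : ℝ => t ^ α * Real.exp (-t)) (Set.Ioi 0) := by
    have e : (fun t : ℝ => t ^ α * Real.exp (-t)) =
        fun t : ℝ => Real.exp (-t) * t ^ (α + 1 - 1) := by
      funext t; rw [add_sub_cancel_right]; ring
    rw [e]; exact h
  exact h2.mono_set (Set.Ioi_subset_Ioi hz)

lemma G_nonneg {α z : ℝ} (hz : 0 ≤ z) : 0 ≤ ∫ t in Set.Ioi z, t ^ α * Real.exp (-t) := by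
  apply setIntegral_nonneg measurableSet_Ioi
  intro t ht
  have ht0 : 0 < t := lt_of_le_of_lt hz ht
  positivity

lemma G_le {α : ℝ} (hα : 0 < α) {z C b : ℝ} (hz : 0 < z) (hb : 0 < b)
    (hC : ∀ t ∈ Set.Ioi z, t ^ α * Real.exp (-t) ≤ C * Real.exp (-b * t)) :
    ∫ t in Set.Ioi z, t ^ α * Real.exp (-t) ≤ C * (b⁻¹ * Real.exp (-b * z)) := by
  have h1 : IntegrableOn (fun t : ℝ => C * Real.exp (-b * t)) (Set.Ioi z) :=
    (exp_neg_integrableOn_Ioi z hb).const_mul C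
  calc ∫ t in Set.Ioi z, t ^ α * Real.exp (-t)
      ≤ ∫ t in Set.Ioi z, C * Real.exp (-b * t) :=
        setIntegral_mono_on (intGamma hα hz.le) h1 measurableSet_Ioi hC
    _ = C * (b⁻¹ * Real.exp (-b * z)) := by rw [integral_const_mul, int_exp_rate hb]



noncomputable def Mc (α : ℝ) : ℝ := max 1 ((4 * (⌈α⌉₊ : ℝ)) ^ (⌈α⌉₊ : ℕ))

lemma Mc_nonneg (α : ℝ) : 0 ≤ Mc α := le_trans zero_le_one (le_max_left _ _)

lemma pt_bound1 {α : ℝ} (hα : 0 < α) {t : ℝ} (ht : 0 < t) :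
    t ^ α * Real.exp (-t) ≤ Mc α * Real.exp (-(3/4 : ℝ) * t) := by
  set k := ⌈α⌉₊ with hk
  have hkpos : (0:ℝ) < (k : ℝ) := by
    exact_mod_cast Nat.ceil_pos.mpr hα
  have hkne : (k : ℕ) ≠ 0 := (Nat.ceil_pos.mpr hα).ne'
  have key : t ^ α ≤ Mc α * Real.exp ((1/4 : ℝ) * t) := by
    rcases le_total t 1 with h1 | h1
    · calc t ^ α ≤ 1 := Real.rpow_le_one ht.le h1 hα.le
        _ ≤ Mc α * 1 := by rw [mul_one]; exact le_max_left _ _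
        _ ≤ Mc α * Real.exp ((1/4 : ℝ) * t) :=
            mul_le_mul_of_nonneg_left (Real.one_le_exp (by linarith)) (Mc_nonneg α)
    · have h2 : t ^ α ≤ t ^ ((k : ℕ) : ℝ) :=
        Real.rpow_le_rpow_of_exponent_le h1 (Nat.le_ceil α)
      rw [Real.rpow_natCast] at h2
      have h3 : t ≤ 4 * (k : ℝ) * Real.exp (t / (4 * (k : ℝ))) := by
        have hE := Real.add_one_le_exp (t / (4 * (k : ℝ)))
        have h4k : (0:ℝ) < 4 * (k : ℝ) := by linarith
        have hmc : t / (4 * (k : ℝ)) * (4 * (k : ℝ)) = t := div_mul_cancel₀ t h4k.ne'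
        nlinarith [Real.exp_pos (t / (4 * (k : ℝ)))]
      have h4 : t ^ (k : ℕ) ≤ (4 * (k : ℝ) * Real.exp (t / (4 * (k : ℝ)))) ^ (k : ℕ) :=
        pow_le_pow_left₀ ht.le h3 k
      have h5 : (4 * (k : ℝ) * Real.exp (t / (4 * (k : ℝ)))) ^ (k : ℕ) =
          (4 * (k : ℝ)) ^ (k : ℕ) * Real.exp ((1/4 : ℝ) * t) := by
        rw [mul_pow, ← Real.exp_nat_mul]
        congr 2
        field_simp
      calc t ^ α ≤ t ^ (k : ℕ) := h2
        _ ≤ (4 * (k : ℝ)) ^ (k : ℕ) * Real.exp ((1/4 : ℝ) * t) := by rw [← h5]; exact h4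
        _ ≤ Mc α * Real.exp ((1/4 : ℝ) * t) :=
            mul_le_mul_of_nonneg_right (le_max_right _ _) (Real.exp_pos _).le
  calc t ^ α * Real.exp (-t)
      ≤ Mc α * Real.exp ((1/4 : ℝ) * t) * Real.exp (-t) :=
        mul_le_mul_of_nonneg_right key (Real.exp_pos _).le
    _ = Mc α * Real.exp (-(3/4 : ℝ) * t) := by
        rw [mul_assoc, ← Real.exp_add]; congr 2; ring

lemma pt_bound2 {α : ℝ} (hα : 0 < α) {x t : ℝ} (hxα : α ≤ x) (hx0 : 0 < x)
    (ht : t ∈ Set.Ioi (2 * x)) :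
    t ^ α * Real.exp (-t) ≤ ((2 * x) ^ α * Real.exp (-x)) * Real.exp (-(1/2 : ℝ) * t) := by
  have h2x : 0 < 2 * x := by linarith
  have ht' : 2 * x < t := ht
  have htpos : 0 < t := lt_trans h2x ht'
  have hs0 : 0 < t / (2 * x) := by positivity
  have hlog : Real.log (t / (2 * x)) ≤ t / (2 * x) - 1 := Real.log_le_sub_one_of_pos hs0
  have h1 : (t / (2 * x)) ^ α = Real.exp (Real.log (t / (2 * x)) * α) :=
    Real.rpow_def_of_pos hs0 α
  have h2 : Real.log (t / (2 * x)) * α ≤ (1/2 : ℝ) * t - x := by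
    have e1 : Real.log (t / (2 * x)) * α ≤ (t / (2 * x) - 1) * α :=
      mul_le_mul_of_nonneg_right hlog hα.le
    have e2 : (t / (2 * x) - 1) * α ≤ (1/2 : ℝ) * t - x := by
      have hdd : t / (2 * x) - 1 = (t - 2 * x) / (2 * x) := by field_simp
      rw [hdd, div_mul_eq_mul_div, div_le_iff₀ h2x]
      nlinarith [mul_le_mul_of_nonneg_left hxα (show (0:ℝ) ≤ t - 2 * x by linarith)]
    linarith
  have h3 : (t / (2 * x)) ^ α ≤ Real.exp ((1/2 : ℝ) * t - x) := by
    rw [h1]; exact Real.exp_le_exp.mpr h2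
  have h4 : t ^ α = (2 * x) ^ α * (t / (2 * x)) ^ α := by
    rw [← Real.mul_rpow h2x.le hs0.le]
    congr 1
    field_simp
  have hexp : Real.exp ((1/2 : ℝ) * t - x) * Real.exp (-t) =
      Real.exp (-x) * Real.exp (-(1/2 : ℝ) * t) := by
    rw [← Real.exp_add, ← Real.exp_add]; congr 1; ring
  calc t ^ α * Real.exp (-t) = (2 * x) ^ α * ((t / (2 * x)) ^ α * Real.exp (-t)) := by
        rw [h4]; ring
    _ ≤ (2 * x) ^ α * (Real.exp ((1/2 : ℝ) * t - x) * Real.exp (-t)) := by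
        apply mul_le_mul_of_nonneg_left _ (Real.rpow_nonneg h2x.le α)
        exact mul_le_mul_of_nonneg_right h3 (Real.exp_pos _).le
    _ = ((2 * x) ^ α * Real.exp (-x)) * Real.exp (-(1/2 : ℝ) * t) := by
        rw [hexp]; ring



lemma key {α : ℝ} (hα : 0 < α) {x c : ℝ} (hx : 0 < x) (hc : 1 ≤ c) :
    IntegrableOn (fun y : ℝ => (Real.log y + x) ^ α * y ^ (-(c+1)))
      (Set.Ioi (Real.exp x)) ∧
    (∫ y in Set.Ioi (Real.exp x), (Real.log y + x) ^ α * y ^ (-(c+1))) =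
      c ^ (-(α+1)) * Real.exp (c * x) *
        ∫ t in Set.Ioi (2*c*x), t ^ α * Real.exp (-t) := by
  have hc0 : (0:ℝ) < c := lt_of_lt_of_le zero_lt_one hc
  set φ : ℝ → ℝ := fun t => Real.exp (t/c - x) with hφ
  have himg : φ '' Set.Ioi (2*c*x) = Set.Ioi (Real.exp x) := by
    ext y
    simp only [Set.mem_image, Set.mem_Ioi]
    constructor
    · rintro ⟨t, ht, rfl⟩
      apply Real.exp_lt_exp.mpr
      have h1 : 2*x < t/c := by rw [lt_div_iff₀ hc0]; nlinarith
      linarith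
    · intro hy
      have hy0 : 0 < y := lt_trans (Real.exp_pos x) hy
      refine ⟨c * (Real.log y + x), ?_, ?_⟩
      · have hl : x < Real.log y := (Real.lt_log_iff_exp_lt hy0).mpr hy
        calc 2*c*x = c*(2*x) := by ring
          _ < c*(Real.log y + x) := by
              apply mul_lt_mul_of_pos_left _ hc0; linarith
      · show Real.exp (c * (Real.log y + x) / c - x) = y
        rw [mul_div_cancel_left₀ _ hc0.ne', add_sub_cancel_right, Real.exp_log hy0]
  have hder : ∀ t ∈ Set.Ioi (2*c*x),
      HasDerivWithinAt φ (Real.exp (t/c - x) / c) (Set.Ioi (2*c*x)) t := by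
    intro t _
    have h := (((hasDerivAt_id t).div_const c).sub_const x).exp
    have h2 : HasDerivAt φ (Real.exp (t/c - x)/c) t := by
      convert h using 1
      all_goals simp [hφ, div_eq_mul_inv]
    exact h2.hasDerivWithinAt
  have hinj : Set.InjOn φ (Set.Ioi (2*c*x)) := by
    intro a _ b _ hab
    have h := Real.exp_eq_exp.mp hab
    have h' : a/c = b/c := by linarith
    field_simp at h'
    exact h'
  have hmest : MeasurableSet (Set.Ioi (2*c*x)) := measurableSet_Ioi
  have heq : ∀ t ∈ Set.Ioi (2*c*x),
      |Real.exp (t/c - x)/c| • ((Real.log (φ t) + x) ^ α * (φ t) ^ (-(c+1))) =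
      (c ^ (-(α+1)) * Real.exp (c*x)) * (t ^ α * Real.exp (-t)) := by
    intro t ht
    have h2cx : (0:ℝ) < 2*c*x := by positivity
    have ht0 : 0 < t := lt_trans h2cx ht
    have habs : |Real.exp (t/c - x)/c| = Real.exp (t/c - x)/c :=
      abs_of_pos (by positivity)
    rw [smul_eq_mul, habs, hφ]
    simp only
    rw [Real.log_exp]
    rw [show Real.exp (t/c - x) ^ (-(c+1)) = Real.exp ((t/c - x) * (-(c+1))) from by
      rw [Real.rpow_def_of_pos (Real.exp_pos _), Real.log_exp]]
    rw [show t/c - x + x = t/c from by ring, Real.div_rpow ht0.le hc0.le]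
    have hexp : Real.exp (t/c - x) * Real.exp ((t/c - x) * (-(c+1))) =
        Real.exp (c*x) * Real.exp (-t) := by
      rw [← Real.exp_add, ← Real.exp_add]
      congr 1
      field_simp
      ring
    have hcα : (0:ℝ) < c ^ α := Real.rpow_pos_of_pos hc0 α
    have hpow : c ^ (-(α+1)) = (c ^ α * c)⁻¹ := by
      rw [Real.rpow_neg hc0.le, Real.rpow_add hc0, Real.rpow_one]
    rw [hpow]
    calc Real.exp (t/c - x)/c * (t ^ α / c ^ α * Real.exp ((t/c - x) * (-(c+1))))
        = (Real.exp (t/c - x) * Real.exp ((t/c - x) * (-(c+1)))) * t ^ α * (c ^ α * c)⁻¹ := by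
          field_simp
      _ = (c ^ α * c)⁻¹ * Real.exp (c*x) * (t ^ α * Real.exp (-t)) := by
          rw [hexp]; ring
  have hint0 : IntegrableOn
      (fun t : ℝ => (c ^ (-(α+1)) * Real.exp (c*x)) * (t ^ α * Real.exp (-t)))
      (Set.Ioi (2*c*x)) := by
    have hz : (0:ℝ) ≤ 2*c*x := by positivity
    have h := Real.GammaIntegral_convergent (s := α + 1) (by linarith)
    have h2 : IntegrableOn (fun t : ℝ => t ^ α * Real.exp (-t)) (Set.Ioi 0) := by
      have e : (fun t : ℝ => t ^ α * Real.exp (-t)) =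
          fun t : ℝ => Real.exp (-t) * t ^ (α + 1 - 1) := by
        funext t; rw [add_sub_cancel_right]; ring
      rw [e]; exact h
    exact (h2.mono_set (Set.Ioi_subset_Ioi hz)).const_mul _
  constructor
  · rw [← himg, integrableOn_image_iff_integrableOn_abs_deriv_smul hmest hder hinj]
    exact hint0.congr_fun (fun t ht => (heq t ht).symm) hmest
  · rw [← himg, integral_image_eq_integral_abs_deriv_smul hmest hder hinj,
      setIntegral_congr_fun hmest (fun t ht => heq t ht), integral_const_mul, mul_assoc]



lemma series {α x y : ℝ} (hx : 0 < x) (hy : Real.exp x < y) :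
    HasSum (fun n : ℕ => ((-1:ℝ)^n * ((n:ℝ)+1)) *
        ((Real.log y + x) ^ α * y ^ (-(((n:ℝ)+1)+1))))
      ((Real.log y + x) ^ α / (y+1)^2) := by
  have h1e : 1 < Real.exp x := by
    rw [show (1:ℝ) = Real.exp 0 from (Real.exp_zero).symm]
    exact Real.exp_lt_exp.mpr hx
  have hy1 : 1 < y := lt_trans h1e hy
  have hy0 : 0 < y := lt_trans one_pos hy1
  set r : ℝ := -y⁻¹ with hr
  have hnorm : ‖r‖ < 1 := by
    rw [hr, norm_neg, norm_inv, Real.norm_eq_abs, abs_of_pos hy0]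
    rw [inv_lt_one_iff₀]
    right; exact hy1
  have hsum1 := hasSum_geometric_of_norm_lt_one hnorm
  have hsum2 := hasSum_coe_mul_geometric_of_norm_lt_one hnorm
  have h1r : (1:ℝ) - r ≠ 0 := by
    rw [hr]
    have : (0:ℝ) < y⁻¹ := by positivity
    intro h; nlinarith [h]
  have hsum3 : HasSum (fun n : ℕ => ((n:ℝ)+1) * r^n) (1/(1-r)^2) := by
    have h := hsum2.add hsum1
    have e : (fun n : ℕ => (n:ℝ) * r^n + r^n) = fun n : ℕ => ((n:ℝ)+1)*r^n := by
      funext n; ring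
    rw [e] at h
    convert h using 1
    · rfl
    field_simp
    ring
  have ha := hsum3.mul_left ((Real.log y + x)^α * y^(-(2:ℝ)))
  have hy2 : y ^ (-(2:ℝ)) = (y^2)⁻¹ := by
    rw [Real.rpow_neg hy0.le, show ((2:ℝ)) = ((2:ℕ):ℝ) from by norm_num,
      Real.rpow_natCast]
  have hfun : (fun n : ℕ => ((Real.log y + x)^α * y^(-(2:ℝ))) * (((n:ℝ)+1) * r^n)) =
      fun n : ℕ => ((-1:ℝ)^n * ((n:ℝ)+1)) *
        ((Real.log y + x) ^ α * y ^ (-(((n:ℝ)+1)+1))) := by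
    funext n
    have e1 : y ^ (-(((n:ℝ)+1)+1)) = y ^ (-(2:ℝ)) * (y⁻¹)^n := by
      rw [show -(((n:ℝ)+1)+1) = (-(2:ℝ)) + (-(n:ℝ)) from by ring, Real.rpow_add hy0]
      congr 1
      rw [inv_pow, ← Real.rpow_natCast y n, ← Real.rpow_neg hy0.le]
    rw [e1, hr, neg_pow]
    ring
  rw [hfun] at ha
  convert ha using 1
  · rfl
  rw [hy2, hr]
  have hyne : y ≠ 0 := hy0.ne'
  have hy1ne : y + 1 ≠ 0 := by positivity
  field_simp
  rw [sub_neg_eq_add, mul_div_assoc, div_self (pow_ne_zero 2 hy1ne), mul_one]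

lemma term_bound {α x : ℝ} (hα : 0 < α) (hx : 0 < x) (n : ℕ) :
    (∫ y in Set.Ioi (Real.exp x),
        ((n:ℝ)+1) * ((Real.log y + x) ^ α * y ^ (-(((n:ℝ)+1)+1))))
      ≤ (4/3 * Mc α) * (Real.exp (-(1/2 : ℝ)*x))^n := by
  have hn : (0:ℝ) ≤ (n:ℝ) := Nat.cast_nonneg n
  have hc : (1:ℝ) ≤ (n:ℝ)+1 := by linarith
  have hc0 : (0:ℝ) < (n:ℝ)+1 := by linarith
  have hkey := (key hα hx hc).2
  rw [integral_const_mul, hkey]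
  set G := ∫ t in Set.Ioi (2*((n:ℝ)+1)*x), t ^ α * Real.exp (-t) with hGdef
  have hz : (0:ℝ) < 2*((n:ℝ)+1)*x := by positivity
  have hG0 : 0 ≤ G := G_nonneg hz.le
  have hGle : G ≤ Mc α * ((3/4:ℝ)⁻¹ * Real.exp (-(3/4:ℝ) * (2*((n:ℝ)+1)*x))) :=
    G_le hα hz (by norm_num) (fun t ht => pt_bound1 hα (lt_trans hz ht))
  have h1eq : ((n:ℝ)+1) * ((n:ℝ)+1)^(-(α+1)) = ((n:ℝ)+1)^(-α) := by
    rw [show -α = 1 + (-(α+1)) from by ring, Real.rpow_add hc0, Real.rpow_one]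
  have h2 : ((n:ℝ)+1)^(-α) ≤ 1 := Real.rpow_le_one_of_one_le_of_nonpos hc (by linarith)
  have hEpos : (0:ℝ) < Real.exp (((n:ℝ)+1)*x) := Real.exp_pos _
  have hM : (0:ℝ) ≤ 4/3 * Mc α := mul_nonneg (by norm_num) (Mc_nonneg α)
  calc ((n:ℝ)+1) * (((n:ℝ)+1)^(-(α+1)) * Real.exp (((n:ℝ)+1)*x) * G)
      = ((n:ℝ)+1)^(-α) * (Real.exp (((n:ℝ)+1)*x) * G) := by
        rw [← h1eq]; ring
    _ ≤ 1 * (Real.exp (((n:ℝ)+1)*x) *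
        (Mc α * ((3/4:ℝ)⁻¹ * Real.exp (-(3/4:ℝ) * (2*((n:ℝ)+1)*x))))) := by
        apply mul_le_mul h2 (mul_le_mul_of_nonneg_left hGle hEpos.le)
          (mul_nonneg hEpos.le hG0) zero_le_one
    _ = (4/3 * Mc α) * (Real.exp (-(1/2:ℝ)*x) * Real.exp ((n:ℝ) * (-(1/2:ℝ)*x))) := by
        rw [one_mul]
        rw [show Real.exp (-(1/2:ℝ)*x) * Real.exp ((n:ℝ) * (-(1/2:ℝ)*x)) =
          Real.exp (-(1/2:ℝ)*x + (n:ℝ)*(-(1/2:ℝ)*x)) from (Real.exp_add _ _).symm]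
        rw [show Real.exp (((n:ℝ)+1)*x) *
            (Mc α * ((3/4:ℝ)⁻¹ * Real.exp (-(3/4:ℝ)*(2*((n:ℝ)+1)*x)))) =
          (4/3 * Mc α) * (Real.exp (((n:ℝ)+1)*x) *
            Real.exp (-(3/4:ℝ)*(2*((n:ℝ)+1)*x))) from by norm_num; ring]
        rw [← Real.exp_add]
        congr 1
        ring
    _ ≤ (4/3 * Mc α) * (1 * Real.exp ((n:ℝ) * (-(1/2:ℝ)*x))) := by
        apply mul_le_mul_of_nonneg_left _ hM
        exact mul_le_mul_of_nonneg_right (Real.exp_le_one_iff.mpr (by linarith))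
          (Real.exp_pos _).le
    _ = (4/3 * Mc α) * (Real.exp (-(1/2:ℝ)*x))^n := by
        rw [one_mul, ← Real.exp_nat_mul]

lemma cont_aux {α x c : ℝ} (hα : 0 ≤ α) (hx : 0 < x) :
    ContinuousOn (fun y : ℝ => (Real.log y + x) ^ α * y ^ c)
      (Set.Ioi (Real.exp x)) := by
  have h0 : ∀ y ∈ Set.Ioi (Real.exp x), (0:ℝ) < y :=
    fun y hy => lt_trans (Real.exp_pos x) hy
  have hlog : ContinuousOn (fun y : ℝ => Real.log y + x) (Set.Ioi (Real.exp x)) :=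
    (Real.continuousOn_log.mono (fun y hy => (h0 y hy).ne')).add continuousOn_const
  have h1 : ContinuousOn (fun y : ℝ => (Real.log y + x) ^ α)
      (Set.Ioi (Real.exp x)) := by
    apply hlog.rpow_const
    intro y hy
    exact Or.inr hα
  have h2 : ContinuousOn (fun y : ℝ => y ^ c) (Set.Ioi (Real.exp x)) := by
    apply continuousOn_id.rpow_const
    intro y hy
    exact Or.inl (h0 y hy).ne'
  exact h1.mul h2

lemma part1 {α : ℝ} (hα : 0 < α) {x : ℝ} (hx : 0 < x) :
    (∫ y in Set.Ioi (Real.exp x), (Real.log y + x) ^ α / (y + 1) ^ 2) =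
      ∑' n : ℕ, (-1 : ℝ) ^ n * ((n : ℝ) + 1) ^ (-α) *
        Real.exp (((n : ℝ) + 1) * x) *
        ∫ t in Set.Ioi (2 * ((n : ℝ) + 1) * x), t ^ α * Real.exp (-t) := by
  have hc : ∀ n : ℕ, (1:ℝ) ≤ (n:ℝ)+1 := fun n =>
    le_add_of_nonneg_left (Nat.cast_nonneg n)
  have hc0 : ∀ n : ℕ, (0:ℝ) < (n:ℝ)+1 := fun n => lt_of_lt_of_le one_pos (hc n)
  have hKey := fun n : ℕ => key hα hx (hc n)
  have hA : (∫ y in Set.Ioi (Real.exp x), (Real.log y + x) ^ α / (y + 1) ^ 2)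
      = ∫ y in Set.Ioi (Real.exp x), ∑' n : ℕ, ((-1:ℝ)^n * ((n:ℝ)+1)) *
          ((Real.log y + x) ^ α * y ^ (-(((n:ℝ)+1)+1))) :=
    setIntegral_congr_fun measurableSet_Ioi
      (fun y hy => ((series hx hy).tsum_eq).symm)
  have hmeas : ∀ n : ℕ, AEStronglyMeasurable
      (fun y : ℝ => ((-1:ℝ)^n * ((n:ℝ)+1)) *
        ((Real.log y + x) ^ α * y ^ (-(((n:ℝ)+1)+1))))
      (volume.restrict (Set.Ioi (Real.exp x))) := fun n =>
    (((cont_aux hα.le hx).const_smul (((-1:ℝ)^n * ((n:ℝ)+1)))).aestronglyMeasurable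
      measurableSet_Ioi)
  have hFnn : ∀ n : ℕ, ∀ y ∈ Set.Ioi (Real.exp x),
      0 ≤ ((n:ℝ)+1) * ((Real.log y + x) ^ α * y ^ (-(((n:ℝ)+1)+1))) := by
    intro n y hy
    have hy0 : (0:ℝ) < y := lt_trans (Real.exp_pos x) hy
    have hl : 0 ≤ Real.log y + x := by
      have : x < Real.log y := (Real.lt_log_iff_exp_lt hy0).mpr hy
      linarith
    exact mul_nonneg (hc0 n).le
      (mul_nonneg (Real.rpow_nonneg hl α) (Real.rpow_nonneg hy0.le _))
  have hFint : ∀ n : ℕ, IntegrableOn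
      (fun y : ℝ => ((n:ℝ)+1) * ((Real.log y + x) ^ α * y ^ (-(((n:ℝ)+1)+1))))
      (Set.Ioi (Real.exp x)) := fun n => (hKey n).1.const_mul _
  have hlin : ∀ n : ℕ, (∫⁻ y in Set.Ioi (Real.exp x),
      ‖((-1:ℝ)^n * ((n:ℝ)+1)) *
        ((Real.log y + x) ^ α * y ^ (-(((n:ℝ)+1)+1)))‖₊) ≤
      ENNReal.ofReal ((4/3 * Mc α) * (Real.exp (-(1/2:ℝ)*x))^n) := by
    intro n
    have step1 : (∫⁻ y in Set.Ioi (Real.exp x),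
        ‖((-1:ℝ)^n * ((n:ℝ)+1)) *
          ((Real.log y + x) ^ α * y ^ (-(((n:ℝ)+1)+1)))‖₊) =
        ∫⁻ y in Set.Ioi (Real.exp x), ENNReal.ofReal
          (((n:ℝ)+1) * ((Real.log y + x) ^ α * y ^ (-(((n:ℝ)+1)+1)))) := by
      apply setLIntegral_congr_fun measurableSet_Ioi
      intro y hy
      beta_reduce
      rw [← Real.enorm_eq_ofReal (hFnn n y hy), enorm_eq_nnnorm]
      congr 1
      simp [nnnorm_mul, nnnorm_pow, nnnorm_neg, nnnorm_one, one_pow, mul_assoc]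
    rw [step1, ← ofReal_integral_eq_lintegral_ofReal (hFint n)
      ((ae_restrict_iff' measurableSet_Ioi).mpr (ae_of_all _ (hFnn n)))]
    exact ENNReal.ofReal_le_ofReal (term_bound hα hx n)
  have hgeo : Summable (fun n : ℕ => (4/3 * Mc α) * (Real.exp (-(1/2:ℝ)*x))^n) :=
    (summable_geometric_of_lt_one (Real.exp_pos _).le
      (Real.exp_lt_one_iff.mpr (by linarith))).mul_left _
  have hgnn : ∀ n : ℕ, 0 ≤ (4/3 * Mc α) * (Real.exp (-(1/2:ℝ)*x))^n := fun n =>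
    mul_nonneg (mul_nonneg (by norm_num) (Mc_nonneg α)) (pow_nonneg (Real.exp_pos _).le n)
  have htop : (∑' n : ℕ, ∫⁻ y in Set.Ioi (Real.exp x),
      ‖((-1:ℝ)^n * ((n:ℝ)+1)) *
        ((Real.log y + x) ^ α * y ^ (-(((n:ℝ)+1)+1)))‖₊) ≠ ⊤ := by
    apply ne_of_lt
    calc (∑' n : ℕ, ∫⁻ y in Set.Ioi (Real.exp x),
        ‖((-1:ℝ)^n * ((n:ℝ)+1)) *
          ((Real.log y + x) ^ α * y ^ (-(((n:ℝ)+1)+1)))‖₊)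
        ≤ ∑' n : ℕ, ENNReal.ofReal ((4/3 * Mc α) * (Real.exp (-(1/2:ℝ)*x))^n) :=
          ENNReal.tsum_le_tsum hlin
      _ = ENNReal.ofReal (∑' n : ℕ, (4/3 * Mc α) * (Real.exp (-(1/2:ℝ)*x))^n) :=
          (ENNReal.ofReal_tsum_of_nonneg hgnn hgeo).symm
      _ < ⊤ := ENNReal.ofReal_lt_top
  rw [hA, integral_tsum hmeas htop]
  apply tsum_congr
  intro n
  rw [integral_const_mul, (hKey n).2]
  have h1eq : ((n:ℝ)+1) * ((n:ℝ)+1)^(-(α+1)) = ((n:ℝ)+1)^(-α) := by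
    rw [show -α = 1 + (-(α+1)) from by ring, Real.rpow_add (hc0 n), Real.rpow_one]
  calc ((-1:ℝ)^n * ((n:ℝ)+1)) * (((n:ℝ)+1)^(-(α+1)) * Real.exp (((n:ℝ)+1)*x) *
        ∫ t in Set.Ioi (2*((n:ℝ)+1)*x), t ^ α * Real.exp (-t))
      = (-1:ℝ)^n * (((n:ℝ)+1) * ((n:ℝ)+1)^(-(α+1))) * Real.exp (((n:ℝ)+1)*x) *
        ∫ t in Set.Ioi (2*((n:ℝ)+1)*x), t ^ α * Real.exp (-t) := by ring
    _ = (-1:ℝ)^n * ((n:ℝ)+1)^(-α) * Real.exp (((n:ℝ)+1)*x) *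
        ∫ t in Set.Ioi (2*((n:ℝ)+1)*x), t ^ α * Real.exp (-t) := by rw [h1eq]

lemma part2 {α : ℝ} (hα : 0 < α) :
    (fun x : ℝ =>
        ∫ y in Set.Ioi (Real.exp x), (Real.log y + x) ^ α / (y + 1) ^ 2)
      =O[atTop] fun x : ℝ => x ^ α * Real.exp (-x) := by
  rw [isBigO_iff]
  use 2 * (2:ℝ) ^ α
  filter_upwards [eventually_ge_atTop (max α 1)] with x hx
  have hx1 : (1:ℝ) ≤ x := le_trans (le_max_right α 1) hx
  have hxα : α ≤ x := le_trans (le_max_left α 1) hx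
  have hx0 : (0:ℝ) < x := lt_of_lt_of_le one_pos hx1
  have hKey := key hα hx0 (le_refl (1:ℝ))
  have hJ := hKey.1
  have hJval := hKey.2
  -- simplify c = 1
  rw [Real.one_rpow, one_mul] at hJval
  have h2x : (2:ℝ) * 1 * x = 2 * x := by ring
  rw [h2x, one_mul] at hJval
  set G := ∫ t in Set.Ioi (2*x), t ^ α * Real.exp (-t) with hGdef
  have hz : (0:ℝ) < 2*x := by linarith
  have hGle : G ≤ ((2*x) ^ α * Real.exp (-x)) * ((1/2:ℝ)⁻¹ * Real.exp (-(1/2:ℝ) * (2*x))) := by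
    apply G_le hα hz (by norm_num)
    intro t ht
    exact pt_bound2 hα hxα hx0 ht
  -- pointwise comparison of integrands
  have hptw : ∀ y ∈ Set.Ioi (Real.exp x),
      (Real.log y + x) ^ α / (y + 1) ^ 2 ≤
        (Real.log y + x) ^ α * y ^ (-((1:ℝ)+1)) := by
    intro y hy
    have hy0 : (0:ℝ) < y := lt_trans (Real.exp_pos x) hy
    have hl : 0 ≤ Real.log y + x := by
      have : x < Real.log y := (Real.lt_log_iff_exp_lt hy0).mpr hy
      linarith
    have hy2 : y ^ (-((1:ℝ)+1)) = (y^2)⁻¹ := by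
      rw [show -((1:ℝ)+1) = -(((2:ℕ):ℝ)) from by norm_num, Real.rpow_neg hy0.le,
        Real.rpow_natCast]
    rw [hy2, ← div_eq_mul_inv]
    apply div_le_div_of_nonneg_left (Real.rpow_nonneg hl α) (by positivity)
    nlinarith
  have hptw0 : ∀ y ∈ Set.Ioi (Real.exp x),
      0 ≤ (Real.log y + x) ^ α / (y + 1) ^ 2 := by
    intro y hy
    have hy0 : (0:ℝ) < y := lt_trans (Real.exp_pos x) hy
    have hl : 0 ≤ Real.log y + x := by
      have : x < Real.log y := (Real.lt_log_iff_exp_lt hy0).mpr hy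
      linarith
    positivity
  -- integrability of the LHS integrand
  have hImeas : AEStronglyMeasurable
      (fun y : ℝ => (Real.log y + x) ^ α / (y + 1) ^ 2)
      (volume.restrict (Set.Ioi (Real.exp x))) := by
    apply ContinuousOn.aestronglyMeasurable _ measurableSet_Ioi
    apply ContinuousOn.div
    · exact ((Real.continuousOn_log.mono
        (fun y hy => (lt_trans (Real.exp_pos x) hy).ne')).add
        continuousOn_const).rpow_const (fun y hy => Or.inr hα.le)
    · exact (continuousOn_id.add continuousOn_const).pow 2
    · intro y hy
      have hy0 : (0:ℝ) < y := lt_trans (Real.exp_pos x) hy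
      positivity
  have hIint : IntegrableOn
      (fun y : ℝ => (Real.log y + x) ^ α / (y + 1) ^ 2)
      (Set.Ioi (Real.exp x)) := by
    apply Integrable.mono hJ hImeas
    apply (ae_restrict_iff' measurableSet_Ioi).mpr
    apply ae_of_all
    intro y hy
    rw [Real.norm_eq_abs, Real.norm_eq_abs, abs_of_nonneg (hptw0 y hy)]
    calc (Real.log y + x) ^ α / (y + 1) ^ 2
        ≤ (Real.log y + x) ^ α * y ^ (-((1:ℝ)+1)) := hptw y hy
      _ ≤ |(Real.log y + x) ^ α * y ^ (-((1:ℝ)+1))| := le_abs_self _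
  -- the integral bound
  have hmain : (∫ y in Set.Ioi (Real.exp x), (Real.log y + x) ^ α / (y + 1) ^ 2)
      ≤ Real.exp x * G := by
    rw [← hJval]
    exact setIntegral_mono_on hIint hJ measurableSet_Ioi hptw
  have hInn : 0 ≤ ∫ y in Set.Ioi (Real.exp x), (Real.log y + x) ^ α / (y + 1) ^ 2 :=
    setIntegral_nonneg measurableSet_Ioi hptw0
  rw [Real.norm_eq_abs, Real.norm_eq_abs, abs_of_nonneg hInn,
    abs_of_nonneg (mul_nonneg (Real.rpow_nonneg hx0.le α) (Real.exp_pos _).le)]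
  calc (∫ y in Set.Ioi (Real.exp x), (Real.log y + x) ^ α / (y + 1) ^ 2)
      ≤ Real.exp x * G := hmain
    _ ≤ Real.exp x * (((2*x) ^ α * Real.exp (-x)) *
        ((1/2:ℝ)⁻¹ * Real.exp (-(1/2:ℝ) * (2*x)))) :=
        mul_le_mul_of_nonneg_left hGle (Real.exp_pos _).le
    _ = 2 * (2:ℝ) ^ α * (x ^ α * Real.exp (-x)) := by
        rw [Real.mul_rpow (by norm_num) hx0.le]
        rw [show -(1/2:ℝ) * (2*x) = -x from by ring]
        rw [show Real.exp x * (((2:ℝ)^α * x^α * Real.exp (-x)) *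
            ((1/2:ℝ)⁻¹ * Real.exp (-x))) =
          2 * (2:ℝ)^α * (x^α * (Real.exp x * Real.exp (-x) * Real.exp (-x))) from by
            norm_num; ring]
        rw [← Real.exp_add]
        rw [show x + -x = 0 from by ring, Real.exp_zero, one_mul]

end Stmt16

open Stmt16 in
/-- Expansion of ∫_{e^x}^∞ (log y + x)^α/(y+1)² dy in terms of upper incomplete
gamma functions, and the resulting O(x^α e^{-x}) bound as x → ∞. -/
theorem stmt_16 (α : ℝ) (hα : 0 < α) :
    (∀ x : ℝ, 0 < x →
        (∫ y in Set.Ioi (Real.exp x), (Real.log y + x) ^ α / (y + 1) ^ 2) =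
          ∑' n : ℕ, (-1 : ℝ) ^ n * ((n : ℝ) + 1) ^ (-α) *
            Real.exp (((n : ℝ) + 1) * x) *
            ∫ t in Set.Ioi (2 * ((n : ℝ) + 1) * x), t ^ α * Real.exp (-t)) ∧
      (fun x : ℝ =>
          ∫ y in Set.Ioi (Real.exp x), (Real.log y + x) ^ α / (y + 1) ^ 2)
        =O[atTop] fun x : ℝ => x ^ α * Real.exp (-x) :=
  ⟨fun _ hx => part1 hα hx, part2 hα⟩
end
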